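/- Let G be a graph on an even number n of vertices with edge labelling f: E(G) → {−1,1}, and suppose G contains a Hamilton cycle C with |Σ_{e ∈ E(C)} f(e)| ≥ t for some real t ≥ 0. Then G contains a perfect matching M with |Σ_{e ∈ M} f(e)| ≥ t/2. -/

import Mathlib

lemma walk_edges_getElem {V : Type*} {G : SimpleGraph V} :
    ∀ {a b : V} (p : G.Walk a b) (k : ℕ) (hk : k < p.length),
      p.edges[k]'(by rwa [SimpleGraph.Walk.length_edges]) =
        s(p.getVert k, p.getVert (k+1))
  | _, _, .nil, k, hk => by simp at hk
  | _, _, .cons h q, 0, hk => by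
      simp [SimpleGraph.Walk.getVert, SimpleGraph.Walk.getVert_zero]
  | _, _, .cons h q, (k+1), hk => by
      simp only [SimpleGraph.Walk.edges_cons, List.getElem_cons_succ,
        SimpleGraph.Walk.getVert_cons_succ]
      exact walk_edges_getElem q k (by simpa using hk)

lemma walk_support_getElem {V : Type*} {G : SimpleGraph V} :
    ∀ {a b : V} (p : G.Walk a b) (j : ℕ) (hj : j < p.length + 1),
      p.support[j]'(by rwa [SimpleGraph.Walk.length_support]) = p.getVert j
  | _, _, .nil, 0, hj => by simp
  | _, _, .nil, (j+1), hj => by simp at hj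
  | _, _, .cons h q, 0, hj => by simp
  | _, _, .cons h q, (j+1), hj => by
      simp only [SimpleGraph.Walk.support_cons, List.getElem_cons_succ,
        SimpleGraph.Walk.getVert_cons_succ]
      exact walk_support_getElem q j (by simpa using hj)

theorem matching_discrepancy_of_hamilton_discrepancy (n : ℕ) (hn : Even n)
    (G : SimpleGraph (Fin n)) (f : Sym2 (Fin n) → ℤ)
    (hf : ∀ e ∈ G.edgeSet, f e = 1 ∨ f e = -1)
    (t : ℝ) (ht : 0 ≤ t)
    (u : Fin n) (p : G.Walk u u) (hp : p.IsHamiltonianCycle)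
    (hdisc : ((|∑ e ∈ p.edges.toFinset, f e| : ℤ) : ℝ) ≥ t) :
    ∃ M : Finset (Sym2 (Fin n)),
      (∀ e ∈ M, e ∈ G.edgeSet) ∧
      (∀ v : Fin n, ∃! e, e ∈ M ∧ v ∈ e) ∧
      ((|∑ e ∈ M, f e| : ℤ) : ℝ) ≥ t / 2 := by
  classical
  have hlen : p.length = n := by simpa using hp.length_eq
  have hn3 : 3 ≤ n := hlen ▸ hp.isCycle.three_le_length
  have hnodup : p.edges.Nodup := hp.isCycle.edges_nodup
  have helen : p.edges.length = n := by rw [SimpleGraph.Walk.length_edges, hlen]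
  set E : ℕ → Sym2 (Fin n) := fun k => s(p.getVert k, p.getVert (k+1)) with hE
  have hEk : ∀ k, (hk : k < n) → p.edges[k]'(by omega) = E k := by
    intro k hk
    exact walk_edges_getElem p k (by omega)
  have hVn : p.getVert n = u := by
    have := p.getVert_length
    rwa [hlen] at this
  -- E is injective on range n
  have Einj : ∀ k, k < n → ∀ k', k' < n → E k = E k' → k = k' := by
    intro k hk k' hk' hkk
    have h1 : p.edges[k]'(by omega) = p.edges[k']'(by omega) := by
      rw [hEk k hk, hEk k' hk', hkk]
    exact (hnodup.getElem_inj_iff).mp h1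
  -- getVert injective on [1, n]
  have hlent : p.support.tail.length = n := by
    simp [SimpleGraph.Walk.length_support, hlen]
  have hsupt : ∀ i, (hi : i < n) → p.support.tail[i]'(by omega) = p.getVert (i+1) := by
    intro i hi
    rw [List.getElem_tail]
    exact walk_support_getElem p (i+1) (by omega)
  have hVinj : ∀ j, 1 ≤ j → j ≤ n → ∀ j', 1 ≤ j' → j' ≤ n →
      p.getVert j = p.getVert j' → j = j' := by
    intro j h1 h2 j' h1' h2' hjj
    have hnd : p.support.tail.Nodup := hp.isCycle.support_nodup
    have e1 : p.support.tail[j-1]'(by omega) = p.getVert j := by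
      have hj : j - 1 + 1 = j := by omega
      rw [hsupt (j-1) (by omega), hj]
    have e2 : p.support.tail[j'-1]'(by omega) = p.getVert j' := by
      have hj : j' - 1 + 1 = j' := by omega
      rw [hsupt (j'-1) (by omega), hj]
    have heq : p.support.tail[j-1]'(by omega) = p.support.tail[j'-1]'(by omega) := by
      rw [e1, e2, hjj]
    have := (hnd.getElem_inj_iff).mp heq
    omega
  -- index of each vertex
  have hidx : ∀ v : Fin n, ∃ j, 1 ≤ j ∧ j ≤ n ∧ p.getVert j = v := by
    intro v
    have hv : v ∈ p.support.tail := by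
      rw [← SimpleGraph.Walk.support_tail_of_not_nil p hp.isCycle.not_nil]
      exact hp.isHamiltonian_tail.mem_support v
    obtain ⟨i, hi, hiv⟩ := List.getElem_of_mem hv
    rw [hlent] at hi
    refine ⟨i+1, by omega, by omega, ?_⟩
    rw [← hsupt i hi]
    exact hiv
  -- membership characterization
  have hchar : ∀ v : Fin n, ∃ a b, a < n ∧ b < n ∧ a % 2 ≠ b % 2 ∧
      ∀ k, k < n → (v ∈ E k ↔ (k = a ∨ k = b)) := by
    intro v
    obtain ⟨j, hj1, hj2, hjv⟩ := hidx v
    refine ⟨j % n, j - 1, Nat.mod_lt _ (by omega), by omega, ?_, ?_⟩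
    · rcases Nat.lt_or_ge j n with h | h
      · rw [Nat.mod_eq_of_lt h]; omega
      · have hjn : j = n := by omega
        rw [hjn, Nat.mod_self]
        obtain ⟨m, hm⟩ := hn
        omega
    · intro k hk
      constructor
      · intro hvk
        simp only [hE, Sym2.mem_iff] at hvk
        rcases hvk with hvk | hvk
        · rcases Nat.eq_zero_or_pos k with rfl | hk1
          · left
            have hgn : p.getVert n = v := by rw [hVn, ← p.getVert_zero]; exact hvk.symm
            have hjn := hVinj j hj1 hj2 n (by omega) le_rfl (by rw [hjv, hgn])
            rw [hjn, Nat.mod_self]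
          · have hjk := hVinj j hj1 hj2 k hk1 (by omega) (by rw [hjv]; exact hvk)
            left
            rw [← hjk, Nat.mod_eq_of_lt (by omega)]
        · right
          have := hVinj j hj1 hj2 (k+1) (by omega) (by omega) (by rw [hjv]; exact hvk)
          omega
      · intro hk2
        rcases hk2 with rfl | rfl
        · rcases Nat.lt_or_ge j n with h | h
          · simp only [hE, Sym2.mem_iff]
            rw [Nat.mod_eq_of_lt h]
            exact Or.inl hjv.symm
          · have hjn : j = n := by omega
            simp only [hE, Sym2.mem_iff]
            rw [hjn, Nat.mod_self]
            left
            have hgv : p.getVert n = v := hjn ▸ hjv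
            rw [p.getVert_zero, ← hVn]
            exact hgv.symm
        · simp only [hE, Sym2.mem_iff]
          right
          have hb : j - 1 + 1 = j := by omega
          rw [hb]
          exact hjv.symm
  -- the two matchings
  set K : ℕ → Finset ℕ := fun r => (Finset.range n).filter (fun k => k % 2 = r) with hK
  set M : ℕ → Finset (Sym2 (Fin n)) := fun r => (K r).image E with hM
  have hMedge : ∀ r, ∀ e ∈ M r, e ∈ G.edgeSet := by
    intro r e he
    simp only [hM, Finset.mem_image, hK, Finset.mem_filter, Finset.mem_range] at he
    obtain ⟨k, ⟨hk, _⟩, rfl⟩ := he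
    simp only [hE]
    exact (G.mem_edgeSet).mpr (p.adj_getVert_succ (by omega))
  have hMmatch : ∀ r, r < 2 → ∀ v : Fin n, ∃! e, e ∈ M r ∧ v ∈ e := by
    intro r hr v
    obtain ⟨a, b, ha, hb, hab, hch⟩ := hchar v
    obtain ⟨c, hc, hcr, hcab⟩ : ∃ c, c < n ∧ c % 2 = r ∧ (c = a ∨ c = b) := by
      rcases Nat.lt_or_ge (a % 2) 1 with h | h
      · rcases Nat.eq_or_lt_of_le (Nat.zero_le r) with h' | h'
        · exact ⟨a, ha, by omega, Or.inl rfl⟩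
        · exact ⟨b, hb, by omega, Or.inr rfl⟩
      · rcases Nat.eq_or_lt_of_le (Nat.zero_le r) with h' | h'
        · exact ⟨b, hb, by omega, Or.inr rfl⟩
        · exact ⟨a, ha, by omega, Or.inl rfl⟩
    refine ⟨E c, ⟨?_, ?_⟩, ?_⟩
    · simp only [hM, Finset.mem_image, hK, Finset.mem_filter, Finset.mem_range]
      exact ⟨c, ⟨hc, hcr⟩, rfl⟩
    · exact (hch c hc).mpr hcab
    · rintro e ⟨he, hve⟩
      simp only [hM, Finset.mem_image, hK, Finset.mem_filter, Finset.mem_range] at he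
      obtain ⟨k, ⟨hk, hkr⟩, rfl⟩ := he
      have hkc : k = c := by
        rcases (hch k hk).mp hve with rfl | rfl <;> rcases hcab with rfl | rfl <;> omega
      rw [hkc]
  -- sum decomposition
  have hdisj : Disjoint (M 0) (M 1) := by
    rw [Finset.disjoint_left]
    intro e he0 he1
    simp only [hM, Finset.mem_image, hK, Finset.mem_filter, Finset.mem_range] at he0 he1
    obtain ⟨k, ⟨hk, hk2⟩, rfl⟩ := he0
    obtain ⟨k', ⟨hk', hk2'⟩, hkk⟩ := he1
    have := Einj k' hk' k hk hkk
    omega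
  have hunion : p.edges.toFinset = M 0 ∪ M 1 := by
    ext e
    simp only [List.mem_toFinset, Finset.mem_union, hM, Finset.mem_image, hK,
      Finset.mem_filter, Finset.mem_range]
    constructor
    · intro he
      obtain ⟨k, hk, hke⟩ := List.getElem_of_mem he
      rw [helen] at hk
      rw [hEk k hk] at hke
      rcases Nat.mod_two_eq_zero_or_one k with h | h
      · exact Or.inl ⟨k, ⟨hk, h⟩, hke⟩
      · exact Or.inr ⟨k, ⟨hk, h⟩, hke⟩
    · rintro (⟨k, ⟨hk, _⟩, rfl⟩ | ⟨k, ⟨hk, _⟩, rfl⟩) <;>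
      · have hm : p.edges[k]'(by omega) ∈ p.edges := List.getElem_mem _
        rwa [hEk k hk] at hm
  have hsum : ∑ e ∈ p.edges.toFinset, f e = ∑ e ∈ M 0, f e + ∑ e ∈ M 1, f e := by
    rw [hunion, Finset.sum_union hdisj]
  -- conclude
  set S0 : ℤ := ∑ e ∈ M 0, f e
  set S1 : ℤ := ∑ e ∈ M 1, f e
  have habs : ((|S0| : ℤ) : ℝ) ≥ t / 2 ∨ ((|S1| : ℤ) : ℝ) ≥ t / 2 := by
    by_contra hcon
    push_neg at hcon
    obtain ⟨h0, h1⟩ := hcon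
    rw [hsum] at hdisc
    have htri : |S0 + S1| ≤ |S0| + |S1| := abs_add_le _ _
    have hcast : ((|S0 + S1| : ℤ) : ℝ) ≤ ((|S0| : ℤ) : ℝ) + ((|S1| : ℤ) : ℝ) := by
      exact_mod_cast htri
    linarith
  rcases habs with h | h
  · exact ⟨M 0, hMedge 0, hMmatch 0 (by omega), h⟩
  · exact ⟨M 1, hMedge 1, hMmatch 1 (by omega), h⟩
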